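/- Let Z be a measurable space, μ a probability measure on Z, Ψ : Z → [0,∞) measurable with ∫ Ψ dμ = 1, and ν := μ.withDensity Ψ. Then AUC* − 1/2 = (1/4) ∫∫ |Ψ(z) − Ψ(w)| dμ(z) dμ(w), where AUC* := ∫∫ ( 1{Ψ(z) < Ψ(w)} + (1/2)·1{Ψ(z) = Ψ(w)} ) dμ(z) dν(w). In particular AUC* ≥ 1/2. -/

import Mathlib

open MeasureTheory

/-- Equation (4) of Theorem 1: `AUC* - 1/2 = (1/4) ∫∫ |Ψ(z) - Ψ(w)| dμ(z) dμ(w)`,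
in particular `AUC* ≥ 1/2`. -/
theorem stmt_0 {Z : Type*} [MeasurableSpace Z] (μ : Measure Z) [IsProbabilityMeasure μ]
    (Ψ : Z → ℝ) (hΨmeas : Measurable Ψ) (hΨnonneg : ∀ z, 0 ≤ Ψ z)
    (hΨint : ∫ z, Ψ z ∂μ = 1)
    (ν : Measure Z) (hν : ν = μ.withDensity (fun z => ENNReal.ofReal (Ψ z)))
    (AUCstar : ℝ)
    (hAUC : AUCstar = ∫ w, (∫ z, ((if Ψ z < Ψ w then (1 : ℝ) else 0)
      + (1 / 2) * (if Ψ z = Ψ w then (1 : ℝ) else 0)) ∂μ) ∂ν) :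
    AUCstar - 1 / 2 = (1 / 4) * ∫ z, (∫ w, |Ψ z - Ψ w| ∂μ) ∂μ
      ∧ 1 / 2 ≤ AUCstar := by
  -- Ψ is integrable
  have hInt : Integrable Ψ μ := by
    by_contra h
    rw [integral_undef h] at hΨint
    norm_num at hΨint
  -- measurability of the kernel
  set k : Z → Z → ℝ := fun z w => ((if Ψ z < Ψ w then (1 : ℝ) else 0)
      + (1 / 2) * (if Ψ z = Ψ w then (1 : ℝ) else 0)) with hk
  have hkmeas : Measurable (fun p : Z × Z => k p.1 p.2) := by
    apply Measurable.add
    · exact (measurable_const.ite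
        (measurableSet_lt (hΨmeas.comp measurable_fst) (hΨmeas.comp measurable_snd))
        measurable_const)
    · exact measurable_const.mul (measurable_const.ite
        (measurableSet_eq_fun (hΨmeas.comp measurable_fst) (hΨmeas.comp measurable_snd))
        measurable_const)
  have hknonneg : ∀ z w, 0 ≤ k z w := by
    intro z w; simp only [hk]; positivity
  have hkle : ∀ z w, k z w ≤ 1 := by
    intro z w; simp only [hk]
    split_ifs with h1 h2
    · exact absurd h2 (ne_of_lt h1)
    · norm_num
    · norm_num
    · norm_num
  -- Ψ ∘ fst and Ψ ∘ snd integrable on product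
  have hΨfst : Integrable (fun p : Z × Z => Ψ p.1) (μ.prod μ) := by
    simpa using hInt.mul_prod (integrable_const (1:ℝ))
  have hΨsnd : Integrable (fun p : Z × Z => Ψ p.2) (μ.prod μ) := by
    simpa using (integrable_const (1:ℝ)).mul_prod hInt
  -- the main kernel
  set K : Z × Z → ℝ := fun p => Ψ p.1 * k p.2 p.1 with hK
  have hKmeas : Measurable K := by
    apply (hΨmeas.comp measurable_fst).mul
    exact hkmeas.comp measurable_swap
  have hKint : Integrable K (μ.prod μ) := by
    refine hΨfst.mono' hKmeas.aestronglyMeasurable ?_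
    filter_upwards with p
    simp only [hK]
    rw [Real.norm_eq_abs, abs_of_nonneg (mul_nonneg (hΨnonneg _) (hknonneg _ _))]
    calc Ψ p.1 * k p.2 p.1 ≤ Ψ p.1 * 1 := by
          exact mul_le_mul_of_nonneg_left (hkle _ _) (hΨnonneg _)
      _ = Ψ p.1 := mul_one _
  -- rewrite AUCstar as an integral over the product measure
  have hswap : Integrable (fun p : Z × Z => K p.swap) (μ.prod μ) := by
    rw [← integrable_swap_iff]; simpa [Function.comp_def] using hKint
  have hAUC2 : AUCstar = ∫ p, K p ∂(μ.prod μ) := by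
    rw [hAUC, hν]
    rw [show (fun z => ENNReal.ofReal (Ψ z)) = fun z => (((Ψ z).toNNReal : NNReal) : ENNReal)
        from rfl,
      integral_withDensity_eq_integral_smul hΨmeas.real_toNNReal]
    have huncurry : Integrable (Function.uncurry fun x z => Ψ x * k z x) (μ.prod μ) := by
      refine hΨfst.mono'
        ((hΨmeas.comp measurable_fst).mul (hkmeas.comp measurable_swap)).aestronglyMeasurable ?_
      filter_upwards with p
      simp only [Function.uncurry]
      rw [Real.norm_eq_abs, abs_of_nonneg (mul_nonneg (hΨnonneg _) (hknonneg _ _))]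
      calc Ψ p.1 * k p.2 p.1 ≤ Ψ p.1 * 1 :=
          mul_le_mul_of_nonneg_left (hkle _ _) (hΨnonneg _)
        _ = Ψ p.1 := mul_one _
    calc ∫ x, (Ψ x).toNNReal • (∫ z, k z x ∂μ) ∂μ
        = ∫ x, ∫ z, Ψ x * k z x ∂μ ∂μ := by
          refine integral_congr_ae (Filter.Eventually.of_forall fun x => ?_)
          show (Ψ x).toNNReal • (∫ z, k z x ∂μ) = ∫ z, Ψ x * k z x ∂μ
          rw [NNReal.smul_def, Real.coe_toNNReal _ (hΨnonneg x), smul_eq_mul, integral_const_mul]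
      _ = ∫ p, K p ∂(μ.prod μ) := MeasureTheory.integral_integral huncurry
  -- symmetrization
  have hsym : ∫ p, K p ∂(μ.prod μ) = ∫ p, K p.swap ∂(μ.prod μ) :=
    (integral_prod_swap K).symm
  have habs : Integrable (fun p : Z × Z => |Ψ p.1 - Ψ p.2|) (μ.prod μ) := by
    refine Integrable.mono' (hΨfst.add hΨsnd) ?_ ?_
    · exact ((hΨmeas.comp measurable_fst).sub (hΨmeas.comp measurable_snd)).abs.aestronglyMeasurable
    · filter_upwards with p
      rw [Real.norm_eq_abs, abs_abs]
      simp only [Pi.add_apply]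
      calc |Ψ p.1 - Ψ p.2| ≤ |Ψ p.1| + |Ψ p.2| := abs_sub _ _
        _ = Ψ p.1 + Ψ p.2 := by rw [abs_of_nonneg (hΨnonneg _), abs_of_nonneg (hΨnonneg _)]
  -- key pointwise identity
  have hpt : ∀ p : Z × Z, K p + K p.swap = (Ψ p.1 + Ψ p.2) / 2 + |Ψ p.1 - Ψ p.2| / 2 := by
    intro p
    simp only [hK, hk, Prod.fst_swap, Prod.snd_swap]
    rcases lt_trichotomy (Ψ p.1) (Ψ p.2) with h | h | h
    · simp [h, h.ne, h.ne', not_lt.mpr h.le, abs_of_nonpos (by linarith : Ψ p.1 - Ψ p.2 ≤ 0)]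
      ring
    · simp [h, abs_of_nonneg (by linarith : (0:ℝ) ≤ Ψ p.1 - Ψ p.2)]
      ring
    · simp [h, h.ne, h.ne', not_lt.mpr h.le, abs_of_nonneg (by linarith : (0:ℝ) ≤ Ψ p.1 - Ψ p.2)]
      ring
  -- marginal integrals
  have hfst : ∫ p, Ψ p.1 ∂(μ.prod μ) = 1 := by
    rw [integral_prod _ hΨfst]
    simp [hΨint]
  have hsnd : ∫ p, Ψ p.2 ∂(μ.prod μ) = 1 := by
    rw [integral_prod _ hΨsnd]
    simp [hΨint]
  -- value of the double absolute-difference integral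
  set I : ℝ := ∫ p, |Ψ p.1 - Ψ p.2| ∂(μ.prod μ) with hI
  have hInonneg : 0 ≤ I := integral_nonneg (fun p => abs_nonneg _)
  have h2A : 2 * AUCstar = 1 + I / 2 := by
    have : 2 * AUCstar = ∫ p, (K p + K p.swap) ∂(μ.prod μ) := by
      rw [integral_add hKint hswap, ← hsym, ← hAUC2]; ring
    rw [this]
    have : ∫ p, (K p + K p.swap) ∂(μ.prod μ)
        = ∫ p, ((Ψ p.1 + Ψ p.2) / 2 + |Ψ p.1 - Ψ p.2| / 2) ∂(μ.prod μ) := by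
      exact integral_congr_ae (Filter.Eventually.of_forall hpt)
    rw [this, integral_add (by exact (hΨfst.add hΨsnd).div_const 2) (habs.div_const 2)]
    rw [integral_div, integral_div, integral_add hΨfst hΨsnd, hfst, hsnd, ← hI]
    norm_num
  -- the iterated integral in the statement equals I
  have hiter : ∫ z, (∫ w, |Ψ z - Ψ w| ∂μ) ∂μ = I := by
    rw [hI, integral_prod _ habs]
  constructor
  · rw [hiter]; linarith
  · linarith
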